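/- For all integers n ≥ 0 and m ≥ 2, sf(n,m) equals the number of partitions of n whose parts have pairwise distinct max m-powers and which contain at most one part not divisible by m. -/

import Mathlib

/-- The semi-`m`-Fibonacci numbers: `sfm m 0 = 1`; `sfm m n = sfm m (n / m)` if
`n > 0` and `m ∣ n`; and `sfm m n = sfm m (n - r) + sfm m (n - m)` if
`n ≡ r (mod m)` with `0 < r < m`, where terms with negative argument are `0`
(the value for `m ≤ 1` is junk). -/
def sfm (m : ℕ) : ℕ → ℕ
  | 0 => 1
  | n + 1 =>
    if m ≤ 1 then 0
    else if (n + 1) % m = 0 then sfm m ((n + 1) / m)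
    else sfm m ((n + 1) - (n + 1) % m) +
      if n + 1 < m then 0 else sfm m ((n + 1) - m)
  termination_by n => n
  decreasing_by
  · exact Nat.div_lt_self (Nat.succ_pos n) (by omega)
  · omega
  · omega

/-- The max `m`-power of `N`, i.e. `m ^ s` where `m ^ s` is the largest power
of `m` dividing `N`. -/
def maxMPow (m N : ℕ) : ℕ := m ^ Nat.maxPowDiv m N


open Multiset

variable {m : ℕ}

lemma maxPowDiv_eq_zero_of_not_dvd {x : ℕ} (hx : ¬ m ∣ x) :
    Nat.maxPowDiv m x = 0 := by
  by_contra h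
  exact hx ((pow_one m ▸ pow_dvd_pow m (Nat.one_le_iff_ne_zero.2 h)).trans
    (Nat.maxPowDiv.pow_dvd (p := m) (n := x)))

lemma maxMPow_eq_one_of_not_dvd {x : ℕ} (hx : ¬ m ∣ x) : maxMPow m x = 1 := by
  rw [maxMPow, maxPowDiv_eq_zero_of_not_dvd hx, pow_zero]

lemma maxMPow_ne_one (hm : 2 ≤ m) {x : ℕ} (hx : m ∣ x) (h0 : 0 < x) :
    maxMPow m x ≠ 1 := by
  have h1 : 1 ≤ Nat.maxPowDiv m x :=
    (Nat.pow_dvd_iff_le_padicValNat (p := m) (n := x) (k := 1) (by omega) h0.ne').1 (by simpa using hx)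
  rw [maxMPow]
  intro h
  have : m ^ Nat.maxPowDiv m x ≥ m ^ 1 := Nat.pow_le_pow_right (by omega) h1
  simp only [pow_one] at this
  omega

lemma maxMPow_mul (hm : 2 ≤ m) {x : ℕ} (h0 : 0 < x) :
    maxMPow m (m * x) = m * maxMPow m x := by
  rw [maxMPow, maxMPow, Nat.maxPowDiv, Nat.maxPowDiv.base_mul_eq_succ (by omega) h0.ne', pow_succ, mul_comm]

lemma countP_le_one (hm : 2 ≤ m) {S : Multiset ℕ}
    (h : (S.map fun x => maxMPow m x).Nodup) :
    S.countP (fun x => ¬ m ∣ x) ≤ 1 := by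
  calc S.countP (fun x => ¬ m ∣ x)
      ≤ (S.map fun x => maxMPow m x).count 1 := by
        rw [count_map, countP_eq_card_filter]
        exact card_le_card (monotone_filter_right S
          (fun x hx => (maxMPow_eq_one_of_not_dvd hx).symm))
    _ ≤ 1 := nodup_iff_count_le_one.1 h 1

lemma erase_all_dvd {S : Multiset ℕ} {a : ℕ}
    (hc : S.countP (fun x => ¬ m ∣ x) ≤ 1) (ha : a ∈ S) (hnd : ¬ m ∣ a) :
    ∀ x ∈ S.erase a, m ∣ x := by
  intro x hx
  by_contra hx'
  have h1 : S.countP (fun x => ¬ m ∣ x)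
      = (S.erase a).countP (fun x => ¬ m ∣ x) + 1 := by
    rw [← cons_erase ha, countP_cons]
    simp [hnd]
  have h2 : 0 < (S.erase a).countP (fun x => ¬ m ∣ x) :=
    countP_pos.2 ⟨x, hx, hx'⟩
  omega

lemma all_dvd_of_dvd_sum {S : Multiset ℕ} (hn : m ∣ S.sum)
    (hc : S.countP (fun x => ¬ m ∣ x) ≤ 1) : ∀ x ∈ S, m ∣ x := by
  intro a ha
  by_contra hnd
  have he : m ∣ (S.erase a).sum :=
    Multiset.dvd_sum (erase_all_dvd hc ha hnd)
  have hsum : a + (S.erase a).sum = S.sum := by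
    conv_rhs => rw [← cons_erase ha]
    rw [sum_cons]
  exact hnd (by
    have := Nat.dvd_sub hn he
    rwa [show S.sum - (S.erase a).sum = a by omega] at this)

lemma special_mod {S : Multiset ℕ} {a : ℕ}
    (hc : S.countP (fun x => ¬ m ∣ x) ≤ 1) (ha : a ∈ S) (hnd : ¬ m ∣ a) :
    a % m = S.sum % m := by
  have he : m ∣ (S.erase a).sum := Multiset.dvd_sum (erase_all_dvd hc ha hnd)
  obtain ⟨k, hk⟩ := he
  have hsum : a + (S.erase a).sum = S.sum := by
    conv_rhs => rw [← cons_erase ha]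
    rw [sum_cons]
  rw [← hsum, hk, Nat.add_mul_mod_self_left]

lemma special_filter (hm : 2 ≤ m) {S : Multiset ℕ} (hn : ¬ m ∣ S.sum)
    (h : (S.map fun x => maxMPow m x).Nodup) :
    ∃ a, S.filter (fun x => ¬ m ∣ x) = {a} ∧ a ∈ S ∧ ¬ m ∣ a ∧ a % m = S.sum % m := by
  have hc := countP_le_one hm h
  have hc1 : S.countP (fun x => ¬ m ∣ x) = 1 := by
    rcases Nat.lt_or_ge 0 (S.countP (fun x => ¬ m ∣ x)) with h' | h'
    · omega
    · exfalso
      have h0 : S.countP (fun x => ¬ m ∣ x) = 0 := by omega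
      exact hn (Multiset.dvd_sum (by
        intro x hx
        by_contra hxx
        exact absurd h0 (countP_pos.2 ⟨x, hx, hxx⟩).ne'))
  rw [countP_eq_card_filter] at hc1
  obtain ⟨a, haf⟩ := card_eq_one.1 hc1
  have haS : a ∈ S.filter (fun x => ¬ m ∣ x) := by rw [haf]; exact mem_singleton_self a
  have h1 := mem_of_mem_filter haS
  have h2 := of_mem_filter haS
  exact ⟨a, haf, h1, h2, special_mod (countP_le_one hm h) h1 h2⟩

lemma sum_map_mul (S : Multiset ℕ) : (S.map (fun x => m * x)).sum = m * S.sum := by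
  simpa using Multiset.sum_map_mul_left (a := m) (f := id) (s := S)

/-- Multiplying all parts by `m`. -/
def scaleEquiv (hm : 2 ≤ m) {n : ℕ} (hn : m ∣ n) :
    {q : Nat.Partition (n / m) // (q.parts.map fun x => maxMPow m x).Nodup} ≃
    {p : Nat.Partition n // (p.parts.map fun x => maxMPow m x).Nodup} where
  toFun := fun ⟨q, hq⟩ => by
    refine ⟨⟨q.parts.map (fun x => m * x), ?_, ?_⟩, ?_⟩
    · intro i hi
      obtain ⟨x, hx, rfl⟩ := Multiset.mem_map.1 hi
      exact Nat.mul_pos (by omega) (q.parts_pos hx)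
    · rw [sum_map_mul, q.parts_sum, Nat.mul_div_cancel' hn]
    · rw [map_map]
      have : q.parts.map ((fun x => maxMPow m x) ∘ (fun x => m * x))
          = (q.parts.map (fun x => maxMPow m x)).map (fun y => m * y) := by
        rw [map_map]
        exact map_congr rfl (fun x hx => maxMPow_mul hm (q.parts_pos hx))
      rw [this]
      exact hq.map (fun a b h => Nat.eq_of_mul_eq_mul_left (by omega) h)
  invFun := fun ⟨p, hp⟩ => by
    have hdvd : ∀ x ∈ p.parts, m ∣ x :=
      all_dvd_of_dvd_sum (by rw [p.parts_sum]; exact hn) (countP_le_one hm hp)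
    have hback : (p.parts.map (fun x => x / m)).map (fun x => m * x) = p.parts := by
      rw [map_map]
      exact (map_congr rfl (fun x hx => Nat.mul_div_cancel' (hdvd x hx))).trans (map_id _)
    refine ⟨⟨p.parts.map (fun x => x / m), ?_, ?_⟩, ?_⟩
    · intro i hi
      obtain ⟨x, hx, rfl⟩ := Multiset.mem_map.1 hi
      exact Nat.div_pos (Nat.le_of_dvd (p.parts_pos hx) (hdvd x hx)) (by omega)
    · have h1 : m * (p.parts.map (fun x => x / m)).sum = n := by
        rw [← sum_map_mul, hback, p.parts_sum]
      obtain ⟨k, rfl⟩ := hn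
      rw [Nat.mul_div_cancel_left k (show 0 < m by omega)]
      exact Nat.eq_of_mul_eq_mul_left (by omega) h1
    · have h2 : ((p.parts.map (fun x => x / m)).map (fun x => maxMPow m x)).map (fun y => m * y)
          = p.parts.map (fun x => maxMPow m x) := by
        rw [map_map]
        have h3 : (p.parts.map (fun x => x / m)).map
              ((fun y => m * y) ∘ (fun x => maxMPow m x))
            = (p.parts.map (fun x => x / m)).map
              ((fun x => maxMPow m x) ∘ (fun x => m * x)) := by
          refine Multiset.map_congr rfl (fun x hx => ?_)
          obtain ⟨z, hz, rfl⟩ := Multiset.mem_map.1 hx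
          have hzpos : 0 < z / m :=
            Nat.div_pos (Nat.le_of_dvd (p.parts_pos hz) (hdvd z hz)) (by omega)
          exact (maxMPow_mul hm hzpos).symm
        rw [h3, ← map_map, hback]
      exact Multiset.Nodup.of_map _ (h2 ▸ hp)
  left_inv := by
    rintro ⟨q, hq⟩
    refine Subtype.ext (Nat.Partition.ext ?_)
    show (q.parts.map (fun x => m * x)).map (fun x => x / m) = q.parts
    rw [map_map]
    exact (map_congr rfl fun x hx =>
      Nat.mul_div_cancel_left x (show 0 < m by omega)).trans (map_id _)
  right_inv := by
    rintro ⟨p, hp⟩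
    refine Subtype.ext (Nat.Partition.ext ?_)
    show (p.parts.map (fun x => x / m)).map (fun x => m * x) = p.parts
    have hdvd : ∀ x ∈ p.parts, m ∣ x :=
      all_dvd_of_dvd_sum (by rw [p.parts_sum]; exact hn) (countP_le_one hm hp)
    rw [map_map]
    exact (map_congr rfl (fun x hx => Nat.mul_div_cancel' (hdvd x hx))).trans (map_id _)

lemma not_dvd_mod {n : ℕ} (hr : n % m ≠ 0) : ¬ m ∣ n % m := by
  intro h
  rcases Nat.eq_zero_or_pos m with h0 | h0
  · subst h0; exact hr (zero_dvd_iff.mp h)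
  · exact hr (Nat.eq_zero_of_dvd_of_lt h (Nat.mod_lt n h0))

/-- Adding a part equal to `n % m`. -/
def insEquiv (hm : 2 ≤ m) {n : ℕ} (hr : n % m ≠ 0) :
    {q : Nat.Partition (n - n % m) // (q.parts.map fun x => maxMPow m x).Nodup} ≃
    {p : Nat.Partition n //
      (p.parts.map fun x => maxMPow m x).Nodup ∧ n % m ∈ p.parts} where
  toFun := fun ⟨q, hq⟩ => by
    have hdm : m ∣ n - n % m := ⟨n / m, by have := Nat.div_add_mod n m; omega⟩
    have hdvd : ∀ x ∈ q.parts, m ∣ x :=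
      all_dvd_of_dvd_sum (by rw [q.parts_sum]; exact hdm) (countP_le_one hm hq)
    refine ⟨⟨(n % m) ::ₘ q.parts, ?_, ?_⟩, ?_, Multiset.mem_cons_self _ _⟩
    · intro i hi
      rcases Multiset.mem_cons.1 hi with rfl | hi
      · omega
      · exact q.parts_pos hi
    · rw [Multiset.sum_cons, q.parts_sum]
      have := Nat.mod_le n m
      omega
    · rw [Multiset.map_cons]
      refine Multiset.nodup_cons.2 ⟨?_, hq⟩
      intro hmem
      obtain ⟨x, hx, hfx⟩ := Multiset.mem_map.1 hmem
      rw [maxMPow_eq_one_of_not_dvd (not_dvd_mod hr)] at hfx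
      exact maxMPow_ne_one hm (hdvd x hx) (q.parts_pos hx) hfx
  invFun := fun ⟨p, hp, hpr⟩ => by
    refine ⟨⟨p.parts.erase (n % m), ?_, ?_⟩, ?_⟩
    · intro i hi
      exact p.parts_pos (Multiset.mem_of_mem_erase hi)
    · have h1 : (n % m) + (p.parts.erase (n % m)).sum = n := by
        conv_rhs => rw [← p.parts_sum, ← Multiset.cons_erase hpr]
        rw [Multiset.sum_cons]
      omega
    · exact Multiset.nodup_of_le (Multiset.map_le_map (Multiset.erase_le _ _)) hp
  left_inv := by
    rintro ⟨q, hq⟩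
    refine Subtype.ext (Nat.Partition.ext ?_)
    show ((n % m) ::ₘ q.parts).erase (n % m) = q.parts
    exact Multiset.erase_cons_head _ _
  right_inv := by
    rintro ⟨p, hp, hpr⟩
    refine Subtype.ext (Nat.Partition.ext ?_)
    show (n % m) ::ₘ (p.parts.erase (n % m)) = p.parts
    exact Multiset.cons_erase hpr

/-- Add `m` to every part not divisible by `m`. -/
def shiftUp (m : ℕ) (S : Multiset ℕ) : Multiset ℕ :=
  S.filter (fun x => m ∣ x) + (S.filter (fun x => ¬ m ∣ x)).map (fun x => x + m)

/-- Subtract `m` from every part not divisible by `m`. -/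
def shiftDown (m : ℕ) (S : Multiset ℕ) : Multiset ℕ :=
  S.filter (fun x => m ∣ x) + (S.filter (fun x => ¬ m ∣ x)).map (fun x => x - m)

lemma not_dvd_add {x : ℕ} (hx : ¬ m ∣ x) : ¬ m ∣ x + m := fun h =>
  hx (by simpa using Nat.dvd_sub h (dvd_refl m))

lemma fmp_sub (hm : 2 ≤ m) {x : ℕ} (hx : ¬ m ∣ x) : maxMPow m (x - m) = 1 := by
  rcases le_or_gt m x with h | h
  · refine maxMPow_eq_one_of_not_dvd (fun hd => hx ?_)
    have := Nat.dvd_add hd (dvd_refl m)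
    rwa [Nat.sub_add_cancel h] at this
  · rw [Nat.sub_eq_zero_of_le h.le, maxMPow, Nat.maxPowDiv, Nat.maxPowDiv.zero, pow_zero]

lemma shiftUp_map_fmp (S : Multiset ℕ) :
    (shiftUp m S).map (fun x => maxMPow m x) = S.map (fun x => maxMPow m x) := by
  rw [shiftUp, Multiset.map_add, Multiset.map_map]
  have : (S.filter (fun x => ¬ m ∣ x)).map ((fun x => maxMPow m x) ∘ (fun x => x + m))
      = (S.filter (fun x => ¬ m ∣ x)).map (fun x => maxMPow m x) := by
    refine Multiset.map_congr rfl (fun x hx => ?_)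
    have hnd := Multiset.of_mem_filter hx
    show maxMPow m (x + m) = maxMPow m x
    rw [maxMPow_eq_one_of_not_dvd (not_dvd_add hnd), maxMPow_eq_one_of_not_dvd hnd]
  rw [this, ← Multiset.map_add, Multiset.filter_add_not]

lemma shiftDown_map_fmp (hm : 2 ≤ m) (S : Multiset ℕ) :
    (shiftDown m S).map (fun x => maxMPow m x) = S.map (fun x => maxMPow m x) := by
  rw [shiftDown, Multiset.map_add, Multiset.map_map]
  have : (S.filter (fun x => ¬ m ∣ x)).map ((fun x => maxMPow m x) ∘ (fun x => x - m))
      = (S.filter (fun x => ¬ m ∣ x)).map (fun x => maxMPow m x) := by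
    refine Multiset.map_congr rfl (fun x hx => ?_)
    have hnd := Multiset.of_mem_filter hx
    show maxMPow m (x - m) = maxMPow m x
    rw [fmp_sub hm hnd, maxMPow_eq_one_of_not_dvd hnd]
  rw [this, ← Multiset.map_add, Multiset.filter_add_not]

lemma filter_sum_split (S : Multiset ℕ) :
    (S.filter (fun x => m ∣ x)).sum + (S.filter (fun x => ¬ m ∣ x)).sum = S.sum := by
  rw [← Multiset.sum_add, Multiset.filter_add_not]

lemma shiftUp_sum {S : Multiset ℕ} {b : ℕ}
    (hb : S.filter (fun x => ¬ m ∣ x) = {b}) : (shiftUp m S).sum = S.sum + m := by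
  have h1 := filter_sum_split (m := m) (S := S)
  rw [hb, Multiset.sum_singleton] at h1
  rw [shiftUp, Multiset.sum_add, hb, Multiset.map_singleton, Multiset.sum_singleton]
  omega

lemma shiftDown_sum {S : Multiset ℕ} {b : ℕ}
    (hb : S.filter (fun x => ¬ m ∣ x) = {b}) (hmb : m < b) :
    (shiftDown m S).sum = S.sum - m := by
  have h1 := filter_sum_split (m := m) (S := S)
  rw [hb, Multiset.sum_singleton] at h1
  rw [shiftDown, Multiset.sum_add, hb, Multiset.map_singleton, Multiset.sum_singleton]
  omega

lemma filter_dvd_shiftUp (S : Multiset ℕ) :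
    (shiftUp m S).filter (fun x => m ∣ x) = S.filter (fun x => m ∣ x) := by
  rw [shiftUp, Multiset.filter_add]
  have h1 : ((S.filter (fun x => m ∣ x)).filter (fun x => m ∣ x))
      = S.filter (fun x => m ∣ x) :=
    Multiset.filter_eq_self.2 (fun x hx => Multiset.of_mem_filter hx)
  have h2 : ((S.filter (fun x => ¬ m ∣ x)).map (fun x => x + m)).filter (fun x => m ∣ x)
      = 0 := by
    refine Multiset.filter_eq_nil.2 (fun x hx => ?_)
    obtain ⟨y, hy, rfl⟩ := Multiset.mem_map.1 hx
    have hnd : ¬ m ∣ y := (Multiset.mem_filter.1 hy).2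
    exact not_dvd_add hnd
  rw [h1, h2, add_zero]

lemma filter_not_dvd_shiftUp (S : Multiset ℕ) :
    (shiftUp m S).filter (fun x => ¬ m ∣ x)
      = (S.filter (fun x => ¬ m ∣ x)).map (fun x => x + m) := by
  rw [shiftUp, Multiset.filter_add]
  have h1 : ((S.filter (fun x => m ∣ x)).filter (fun x => ¬ m ∣ x)) = 0 := by
    refine Multiset.filter_eq_nil.2 (fun x hx h => ?_)
    exact h (Multiset.of_mem_filter hx)
  have h2 : ((S.filter (fun x => ¬ m ∣ x)).map (fun x => x + m)).filter (fun x => ¬ m ∣ x)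
      = (S.filter (fun x => ¬ m ∣ x)).map (fun x => x + m) := by
    refine Multiset.filter_eq_self.2 (fun x hx => ?_)
    obtain ⟨y, hy, rfl⟩ := Multiset.mem_map.1 hx
    have hnd : ¬ m ∣ y := (Multiset.mem_filter.1 hy).2
    exact not_dvd_add hnd
  rw [h1, h2, zero_add]

lemma shiftDown_shiftUp (S : Multiset ℕ) : shiftDown m (shiftUp m S) = S := by
  rw [shiftDown, filter_dvd_shiftUp, filter_not_dvd_shiftUp, Multiset.map_map]
  have : (S.filter (fun x => ¬ m ∣ x)).map ((fun x => x - m) ∘ (fun x => x + m))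
      = S.filter (fun x => ¬ m ∣ x) := by
    refine (Multiset.map_congr rfl (fun x _ => ?_)).trans (Multiset.map_id _)
    show x + m - m = x
    omega
  rw [this, Multiset.filter_add_not]

lemma filter_dvd_shiftDown {S : Multiset ℕ} (hS : ∀ x ∈ S, ¬ m ∣ x → m < x) :
    (shiftDown m S).filter (fun x => m ∣ x) = S.filter (fun x => m ∣ x) := by
  rw [shiftDown, Multiset.filter_add]
  have h1 : ((S.filter (fun x => m ∣ x)).filter (fun x => m ∣ x))
      = S.filter (fun x => m ∣ x) :=
    Multiset.filter_eq_self.2 (fun x hx => Multiset.of_mem_filter hx)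
  have h2 : ((S.filter (fun x => ¬ m ∣ x)).map (fun x => x - m)).filter (fun x => m ∣ x)
      = 0 := by
    refine Multiset.filter_eq_nil.2 (fun x hx => ?_)
    obtain ⟨y, hy, rfl⟩ := Multiset.mem_map.1 hx
    have hnd := Multiset.of_mem_filter hy
    have hlt := hS y (Multiset.mem_of_mem_filter hy) hnd
    intro hd
    have := Nat.dvd_add hd (dvd_refl m)
    rw [Nat.sub_add_cancel hlt.le] at this
    exact hnd this
  rw [h1, h2, add_zero]

lemma filter_not_dvd_shiftDown {S : Multiset ℕ} (hS : ∀ x ∈ S, ¬ m ∣ x → m < x) :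
    (shiftDown m S).filter (fun x => ¬ m ∣ x)
      = (S.filter (fun x => ¬ m ∣ x)).map (fun x => x - m) := by
  rw [shiftDown, Multiset.filter_add]
  have h1 : ((S.filter (fun x => m ∣ x)).filter (fun x => ¬ m ∣ x)) = 0 := by
    refine Multiset.filter_eq_nil.2 (fun x hx h => ?_)
    exact h (Multiset.of_mem_filter hx)
  have h2 : ((S.filter (fun x => ¬ m ∣ x)).map (fun x => x - m)).filter (fun x => ¬ m ∣ x)
      = (S.filter (fun x => ¬ m ∣ x)).map (fun x => x - m) := by
    refine Multiset.filter_eq_self.2 (fun x hx => ?_)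
    obtain ⟨y, hy, rfl⟩ := Multiset.mem_map.1 hx
    have hnd := Multiset.of_mem_filter hy
    have hlt := hS y (Multiset.mem_of_mem_filter hy) hnd
    intro hd
    have := Nat.dvd_add hd (dvd_refl m)
    rw [Nat.sub_add_cancel hlt.le] at this
    exact hnd this
  rw [h1, h2, zero_add]

lemma shiftUp_shiftDown {S : Multiset ℕ} (hS : ∀ x ∈ S, ¬ m ∣ x → m < x) :
    shiftUp m (shiftDown m S) = S := by
  rw [shiftUp, filter_dvd_shiftDown hS, filter_not_dvd_shiftDown hS, Multiset.map_map]
  have : (S.filter (fun x => ¬ m ∣ x)).map ((fun x => x + m) ∘ (fun x => x - m))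
      = S.filter (fun x => ¬ m ∣ x) := by
    refine (Multiset.map_congr rfl (fun x hx => ?_)).trans (Multiset.map_id _)
    have hnd : ¬ m ∣ x := (Multiset.mem_filter.1 hx).2
    have hlt := hS x (Multiset.mem_of_mem_filter hx) hnd
    show x - m + m = x
    omega
  rw [this, Multiset.filter_add_not]

lemma not_dvd_of_mod_ne {n : ℕ} (hm : 2 ≤ m) (hr : n % m ≠ 0) : ¬ m ∣ n := by
  intro h
  obtain ⟨k, rfl⟩ := h
  exact hr (Nat.mul_mod_right m k)

lemma not_dvd_sub_of_mod_ne {n : ℕ} (hm : 2 ≤ m) (hr : n % m ≠ 0) (hnm : m ≤ n) :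
    ¬ m ∣ (n - m) := by
  intro h
  have := Nat.dvd_add h (dvd_refl m)
  rw [Nat.sub_add_cancel hnm] at this
  exact not_dvd_of_mod_ne hm hr this

lemma special_gt {n a : ℕ} (hm : 2 ≤ m) (hr : n % m ≠ 0)
    (hamod : a % m = n % m) (hane : a ≠ n % m) : m < a := by
  rcases lt_or_ge a m with h | h
  · rw [Nat.mod_eq_of_lt h] at hamod
    exact absurd hamod hane
  rcases Nat.eq_or_lt_of_le h with rfl | h'
  · rw [Nat.mod_self] at hamod
    exact absurd hamod.symm hr
  · exact h'

/-- Adding `m` to the unique part not divisible by `m`. -/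
def shiftEquiv (hm : 2 ≤ m) {n : ℕ} (hr : n % m ≠ 0) (hnm : m ≤ n) :
    {q : Nat.Partition (n - m) // (q.parts.map fun x => maxMPow m x).Nodup} ≃
    {p : Nat.Partition n //
      (p.parts.map fun x => maxMPow m x).Nodup ∧ n % m ∉ p.parts} where
  toFun := fun ⟨q, hq⟩ => by
    refine ⟨⟨shiftUp m q.parts, ?_, ?_⟩, ?_, ?_⟩
    · intro i hi
      rcases Multiset.mem_add.1 hi with hi | hi
      · exact q.parts_pos (Multiset.mem_of_mem_filter hi)
      · obtain ⟨y, hy, rfl⟩ := Multiset.mem_map.1 hi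
        omega
    · obtain ⟨b, hb, -, -, -⟩ := special_filter hm
        (by rw [q.parts_sum]; exact not_dvd_sub_of_mod_ne hm hr hnm) hq
      rw [shiftUp_sum hb, q.parts_sum]
      omega
    · exact shiftUp_map_fmp q.parts ▸ hq
    · intro hmem
      have hrm : n % m < m := Nat.mod_lt n (by omega)
      rcases Multiset.mem_add.1 hmem with hi | hi
      · exact not_dvd_mod hr (Multiset.of_mem_filter hi)
      · obtain ⟨y, hy, hyeq⟩ := Multiset.mem_map.1 hi
        omega
  invFun := fun ⟨p, hp, hrp⟩ => by
    have hnd : ¬ m ∣ p.parts.sum := by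
      rw [p.parts_sum]; exact not_dvd_of_mod_ne hm hr
    refine ⟨⟨shiftDown m p.parts, ?_, ?_⟩, ?_⟩
    · intro i hi
      rcases Multiset.mem_add.1 hi with hi | hi
      · exact p.parts_pos (Multiset.mem_of_mem_filter hi)
      · obtain ⟨y, hy, rfl⟩ := Multiset.mem_map.1 hi
        obtain ⟨a, ha, hamem, hand, hamod⟩ := special_filter hm hnd hp
        rw [ha, Multiset.mem_singleton] at hy
        subst hy
        have := special_gt hm hr (by rwa [p.parts_sum] at hamod)
          (fun h => hrp (h ▸ hamem))
        omega
    · obtain ⟨a, ha, hamem, hand, hamod⟩ := special_filter hm hnd hp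
      have := special_gt hm hr (by rwa [p.parts_sum] at hamod)
        (fun h => hrp (h ▸ hamem))
      rw [shiftDown_sum ha this, p.parts_sum]
    · exact shiftDown_map_fmp hm p.parts ▸ hp
  left_inv := by
    rintro ⟨q, hq⟩
    refine Subtype.ext (Nat.Partition.ext ?_)
    show shiftDown m (shiftUp m q.parts) = q.parts
    exact shiftDown_shiftUp q.parts
  right_inv := by
    rintro ⟨p, hp, hrp⟩
    refine Subtype.ext (Nat.Partition.ext ?_)
    show shiftUp m (shiftDown m p.parts) = p.parts
    refine shiftUp_shiftDown (fun x hx hxnd => ?_)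
    have hnd : ¬ m ∣ p.parts.sum := by
      rw [p.parts_sum]; exact not_dvd_of_mod_ne hm hr
    obtain ⟨a, ha, hamem, hand, hamod⟩ := special_filter hm hnd hp
    have hxa : x = a := by
      have : x ∈ p.parts.filter (fun x => ¬ m ∣ x) := Multiset.mem_filter.2 ⟨hx, hxnd⟩
      rwa [ha, Multiset.mem_singleton] at this
    subst hxa
    exact special_gt hm hr (by rwa [p.parts_sum] at hamod) (fun h => hrp (h ▸ hamem))

lemma card_split {α : Type*} [Finite α] (P Q : α → Prop) :
    Nat.card {x // P x} = Nat.card {x // P x ∧ Q x} + Nat.card {x // P x ∧ ¬ Q x} := by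
  classical
  calc Nat.card {x // P x}
      = Nat.card ({x : {x // P x} // Q x.val} ⊕ {x : {x // P x} // ¬ Q x.val}) :=
        Nat.card_congr (Equiv.sumCompl (fun x : {x // P x} => Q x.val)).symm
    _ = Nat.card {x : {x // P x} // Q x.val} + Nat.card {x : {x // P x} // ¬ Q x.val} :=
        Nat.card_sum
    _ = Nat.card {x // P x ∧ Q x} + Nat.card {x // P x ∧ ¬ Q x} := by
        rw [Nat.card_congr (Equiv.subtypeSubtypeEquivSubtypeInter P Q),
          Nat.card_congr (Equiv.subtypeSubtypeEquivSubtypeInter P (fun x => ¬ Q x))]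

lemma empty_case (hm : 2 ≤ m) {n : ℕ} (hr : n % m ≠ 0) (hnm : n < m) :
    IsEmpty {p : Nat.Partition n //
      (p.parts.map fun x => maxMPow m x).Nodup ∧ n % m ∉ p.parts} := by
  refine ⟨fun ⟨p, hp, hrp⟩ => ?_⟩
  have hnd : ¬ m ∣ p.parts.sum := by
    rw [p.parts_sum]; exact not_dvd_of_mod_ne hm hr
  obtain ⟨a, ha, hamem, hand, hamod⟩ := special_filter hm hnd hp
  have h1 : a ≤ n := p.parts_sum ▸ Multiset.le_sum_of_mem hamem
  have h2 : a % m = n % m := by rwa [p.parts_sum] at hamod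
  rw [Nat.mod_eq_of_lt (lt_of_le_of_lt h1 hnm)] at h2
  exact hrp (h2 ▸ hamem)

lemma key (hm : 2 ≤ m) : ∀ n, sfm m n
    = Nat.card {p : Nat.Partition n // (p.parts.map fun x => maxMPow m x).Nodup} := by
  intro n
  induction n using Nat.strong_induction_on with
  | _ n ih =>
    match n with
    | 0 =>
      rw [sfm]
      have hall : ∀ p : Nat.Partition 0, ((p.parts.map fun x => maxMPow m x)).Nodup := by
        intro p
        rw [Nat.Partition.partition_zero_parts p]
        simp
      rw [Nat.card_congr (Equiv.subtypeUnivEquiv hall)]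
      exact (Nat.card_unique).symm
    | n + 1 =>
      by_cases hd : (n + 1) % m = 0
      · rw [sfm, if_neg (by omega), if_pos hd]
        have hdvd : m ∣ (n + 1) := Nat.dvd_of_mod_eq_zero hd
        rw [ih ((n + 1) / m) (Nat.div_lt_self (by omega) (by omega))]
        exact Nat.card_congr (scaleEquiv hm hdvd)
      · rw [sfm, if_neg (by omega), if_neg hd]
        rw [card_split (P := fun p : Nat.Partition (n + 1) =>
            ((p.parts.map fun x => maxMPow m x)).Nodup)
          (Q := fun p => (n + 1) % m ∈ p.parts)]
        have hmod_pos : 0 < (n + 1) % m := Nat.pos_of_ne_zero hd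
        congr 1
        · rw [ih ((n + 1) - (n + 1) % m) (by omega)]
          exact Nat.card_congr (insEquiv hm hd)
        · by_cases hnm : n + 1 < m
          · rw [if_pos hnm]
            have := empty_case hm hd hnm
            exact (Nat.card_of_isEmpty).symm
          · rw [if_neg hnm]
            rw [ih ((n + 1) - m) (by omega)]
            exact Nat.card_congr (shiftEquiv hm hd (by omega))

theorem sfm_eq_card_distinct_maxMPow (n m : ℕ) (hm : 2 ≤ m) :
    sfm m n = Nat.card {p : n.Partition //
      (p.parts.map fun x => maxMPow m x).Nodup ∧
      p.parts.countP (fun x => ¬ m ∣ x) ≤ 1} := by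
  rw [key hm n]
  refine (Nat.card_congr (Equiv.subtypeEquivRight (fun p => ?_))).symm
  exact ⟨fun h => h.1, fun h => ⟨h, countP_le_one hm h⟩⟩
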